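/- The two matrices A = [[0, 1], [−1, 2]] and B = [[2, 1], [−1, 0]] in SL(2, ℤ) generate a free group of rank two: the group homomorphism from the free group on two generators to SL(2, ℤ) sending the generators to A and B respectively is injective. -/

import Mathlib

open Pointwise

/-- The matrix `A = [[0,1],[−1,2]]` in `SL(2,ℤ)`. -/
def matA : Matrix.SpecialLinearGroup (Fin 2) ℤ :=
  ⟨!![0, 1; -1, 2], by norm_num [Matrix.det_fin_two_of]⟩

/-- The matrix `B = [[2,1],[−1,0]]` in `SL(2,ℤ)`. -/
def matB : Matrix.SpecialLinearGroup (Fin 2) ℤ :=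
  ⟨!![2, 1; -1, 0], by norm_num [Matrix.det_fin_two_of]⟩

namespace PingPongAux

abbrev SL2 : Type := Matrix.SpecialLinearGroup (Fin 2) ℤ

/-- Nonzero integer vectors. -/
def NZ : Type := {v : Fin 2 → ℤ // v ≠ 0}

instance : SMul SL2 NZ :=
  ⟨fun g v => ⟨g.1.mulVec v.1, fun h => v.2 (by
    have h2 : (g⁻¹).1.mulVec (g.1.mulVec v.1) = (g⁻¹).1.mulVec 0 := by rw [h]
    rwa [Matrix.mulVec_mulVec, Matrix.mulVec_zero,
      ← Matrix.SpecialLinearGroup.coe_mul, inv_mul_cancel,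
      Matrix.SpecialLinearGroup.coe_one, Matrix.one_mulVec] at h2)⟩⟩

lemma smul_coe (g : SL2) (v : NZ) : (g • v).1 = g.1.mulVec v.1 := rfl

instance : MulAction SL2 NZ where
  one_smul v := Subtype.ext (by
    rw [smul_coe, Matrix.SpecialLinearGroup.coe_one, Matrix.one_mulVec])
  mul_smul g h v := Subtype.ext (by
    simp only [smul_coe, Matrix.SpecialLinearGroup.coe_mul, Matrix.mulVec_mulVec])

lemma smul_apply (g : SL2) (v : NZ) (k : Fin 2) :
    (g • v).1 k = g.1 k 0 * v.1 0 + g.1 k 1 * v.1 1 := by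
  rw [smul_coe]
  simp [Matrix.mulVec, dotProduct, Fin.sum_univ_two]

/-- `u`-coordinate. -/
def U (p : NZ) : ℤ := p.1 1 - p.1 0
/-- `v`-coordinate. -/
def V (p : NZ) : ℤ := p.1 0 + p.1 1

lemma key (p : NZ) : 0 < U p ^ 2 + V p ^ 2 := by
  by_contra h
  push_neg at h
  have hU : U p = 0 := by nlinarith [sq_nonneg (U p), sq_nonneg (V p)]
  have hV : V p = 0 := by nlinarith [sq_nonneg (U p), sq_nonneg (V p)]
  apply p.2
  have h0 : p.1 0 = 0 := by simp only [U, V] at hU hV; omega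
  have h1 : p.1 1 = 0 := by simp only [U, V] at hU hV; omega
  funext k
  fin_cases k <;> simpa using by first | exact h0 | exact h1


/-- Inverse of `matA`. -/
def matAi : SL2 := ⟨!![2, -1; 1, 0], by norm_num [Matrix.det_fin_two_of]⟩
/-- Inverse of `matB`. -/
def matBi : SL2 := ⟨!![0, -1; 1, 2], by norm_num [Matrix.det_fin_two_of]⟩

lemma invA : matA⁻¹ = matAi := by
  apply inv_eq_of_mul_eq_one_right
  apply Subtype.ext
  rw [Matrix.SpecialLinearGroup.coe_mul, Matrix.SpecialLinearGroup.coe_one]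
  show (!![0, 1; -1, 2] : Matrix (Fin 2) (Fin 2) ℤ) * !![2, -1; 1, 0] = 1
  ext i j
  fin_cases i <;> fin_cases j <;> simp [Matrix.mul_apply, Fin.sum_univ_two]

lemma invB : matB⁻¹ = matBi := by
  apply inv_eq_of_mul_eq_one_right
  apply Subtype.ext
  rw [Matrix.SpecialLinearGroup.coe_mul, Matrix.SpecialLinearGroup.coe_one]
  show (!![2, 1; -1, 0] : Matrix (Fin 2) (Fin 2) ℤ) * !![0, -1; 1, 2] = 1
  ext i j
  fin_cases i <;> fin_cases j <;> simp [Matrix.mul_apply, Fin.sum_univ_two]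

lemma UA (p : NZ) : U (matA • p) = U p := by
  simp only [U, smul_apply]; simp [matA]; ring
lemma VA (p : NZ) : V (matA • p) = V p + 2 * U p := by
  simp only [U, V, smul_apply]; simp [matA]; ring
lemma UAi (p : NZ) : U (matAi • p) = U p := by
  simp only [U, smul_apply]; simp [matAi]; ring
lemma VAi (p : NZ) : V (matAi • p) = V p - 2 * U p := by
  simp only [U, V, smul_apply]; simp [matAi]; ring
lemma UB (p : NZ) : U (matB • p) = U p - 2 * V p := by
  simp only [U, V, smul_apply]; simp [matB]; ring
lemma VB (p : NZ) : V (matB • p) = V p := by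
  simp only [V, smul_apply]; simp [matB]; ring
lemma UBi (p : NZ) : U (matBi • p) = U p + 2 * V p := by
  simp only [U, V, smul_apply]; simp [matBi]; ring
lemma VBi (p : NZ) : V (matBi • p) = V p := by
  simp only [V, smul_apply]; simp [matBi]; ring

/-- Ping-pong `X` sets. -/
def XS : Fin 2 → Set NZ :=
  ![{p | U p * V p > U p ^ 2}, {p | U p * V p < -(V p ^ 2)}]
/-- Ping-pong `Y` sets. -/
def YS : Fin 2 → Set NZ :=
  ![{p | U p * V p ≤ -(U p ^ 2)}, {p | U p * V p ≥ V p ^ 2}]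

lemma ptA : ((⟨![1, 2], by intro h; simpa using congrFun h 0⟩ : NZ)) ∈ XS 0 := by
  show U _ * V _ > U _ ^ 2
  decide

lemma ptB : ((⟨![2, -1], by intro h; simpa using congrFun h 0⟩ : NZ)) ∈ XS 1 := by
  show U _ * V _ < -(V _ ^ 2)
  decide

end PingPongAux

open PingPongAux in
theorem matrices_A_B_free :
    Function.Injective
      ⇑(FreeGroup.lift (fun i : Fin 2 => if i = 0 then matA else matB)) := by
  apply FreeGroup.injective_lift_of_ping_pong _ XS YS
  · -- nonempty
    intro i
    fin_cases i
    · exact ⟨_, ptA⟩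
    · exact ⟨_, ptB⟩
  · -- X disjoint
    intro i j hij
    fin_cases i <;> fin_cases j <;> simp_all <;>
      · rw [Function.onFun]
        apply Set.disjoint_left.mpr
        intro p h0 h1
        simp only [XS, Matrix.cons_val_zero, Matrix.cons_val_one, Matrix.head_cons,
          Set.mem_setOf_eq, Fin.zero_eta, Fin.mk_one, Fin.isValue] at h0 h1
        nlinarith [key p, sq_nonneg (U p), sq_nonneg (V p), sq_nonneg (U p - V p),
          sq_nonneg (U p + V p)]
  · -- Y disjoint
    intro i j hij
    fin_cases i <;> fin_cases j <;> simp_all <;>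
      · rw [Function.onFun]
        apply Set.disjoint_left.mpr
        intro p h0 h1
        simp only [YS, Matrix.cons_val_zero, Matrix.cons_val_one, Matrix.head_cons,
          Set.mem_setOf_eq, Fin.zero_eta, Fin.mk_one, Fin.isValue] at h0 h1
        nlinarith [key p, sq_nonneg (U p), sq_nonneg (V p), sq_nonneg (U p - V p),
          sq_nonneg (U p + V p)]
  · -- XY disjoint
    intro i j
    fin_cases i <;> fin_cases j <;>
      · apply Set.disjoint_left.mpr
        intro p h0 h1
        simp only [XS, YS, Matrix.cons_val_zero, Matrix.cons_val_one, Matrix.head_cons,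
          Set.mem_setOf_eq, Fin.zero_eta, Fin.mk_one, Fin.isValue] at h0 h1
        nlinarith [key p, sq_nonneg (U p), sq_nonneg (V p), sq_nonneg (U p - V p),
          sq_nonneg (U p + V p)]
  · -- hX
    intro i
    fin_cases i
    · show matA • (YS 0)ᶜ ⊆ XS 0
      rintro x ⟨p, hp, rfl⟩
      simp only [YS, XS, Set.mem_compl_iff, Matrix.cons_val_zero, Set.mem_setOf_eq,
        not_le, Fin.zero_eta, Fin.mk_one, Fin.isValue] at hp ⊢
      rw [UA, VA]
      nlinarith [sq_nonneg (U p)]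
    · show matB • (YS 1)ᶜ ⊆ XS 1
      rintro x ⟨p, hp, rfl⟩
      simp only [YS, XS, Set.mem_compl_iff, Matrix.cons_val_one, Matrix.head_cons, Matrix.cons_val_zero,
        Set.mem_setOf_eq, not_le, Fin.zero_eta, Fin.mk_one, Fin.isValue] at hp ⊢
      rw [UB, VB]
      nlinarith [sq_nonneg (V p)]
  · -- hY
    intro i
    fin_cases i
    · show matA⁻¹ • (XS 0)ᶜ ⊆ YS 0
      rw [invA]
      rintro x ⟨p, hp, rfl⟩
      simp only [YS, XS, Set.mem_compl_iff, Matrix.cons_val_zero, Set.mem_setOf_eq,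
        not_lt, Fin.zero_eta, Fin.mk_one, Fin.isValue] at hp ⊢
      rw [UAi, VAi]
      nlinarith [sq_nonneg (U p)]
    · show matB⁻¹ • (XS 1)ᶜ ⊆ YS 1
      rw [invB]
      rintro x ⟨p, hp, rfl⟩
      simp only [YS, XS, Set.mem_compl_iff, Matrix.cons_val_one, Matrix.head_cons, Matrix.cons_val_zero,
        Set.mem_setOf_eq, not_lt, Fin.zero_eta, Fin.mk_one, Fin.isValue] at hp ⊢
      rw [UBi, VBi]
      nlinarith [sq_nonneg (V p)]
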